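/- Let $A_m \subseteq A_{m-1} \subseteq \ldots \subseteq A_1 \subseteq B_1 \subseteq \ldots \subseteq B_m$ be full lattices in a vector space over the fraction field of a DVR with uniformizer $\pi$, equipped with a duality $L \mapsto L^\vee$ reversing inclusions and preserving indices ($[M:N] = [N^\vee:M^\vee]$). Suppose for each $1 \leq i \leq m$: $\pi A_i^\vee \overset{1}{\subset} B_i$, $\pi B_i^\vee \overset{1}{\subset} A_i$, and $[B_i : A_i] = h_i$, where $0 \leq h_1 < \ldots < h_m$ are given integers. Then for all $1 \leq i < m$: $[A_i : A_{i+1}] = [B_{i+1} : B_i] = (h_{i+1} - h_i)/2$. -/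

import Mathlib

/- Statement 19: for a polarized chain of lattices
`A_m ⊆ … ⊆ A_1 ⊆ B_1 ⊆ … ⊆ B_m` with `π A_i^∨ ⊂¹ B_i`, `π B_i^∨ ⊂¹ A_i` and
`[B_i : A_i] = h_i`, one has `[A_i : A_{i+1}] = [B_{i+1} : B_i] = (h_{i+1}-h_i)/2`. -/

open Pointwise

variable {O : Type*} [CommRing O] [IsDomain O] [IsDiscreteValuationRing O]
variable (K : Type*) [Field K] [Algebra O K] [IsFractionRing O K]
variable {V : Type*} [AddCommGroup V] [Module K V] [Module O V] [IsScalarTower O K V]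
  [SMulCommClass K O V]

/-- Multiplication of a lattice by `π^a`, `a : ℤ`. -/
noncomputable def piSm (π : O) (a : ℤ) (Λ : Submodule O V) : Submodule O V :=
  ((algebraMap O K π) ^ a) • Λ

/-- A full `O`-lattice in `V`: finitely generated and spanning `V` over `K`. -/
def IsFullLat (Λ : Submodule O V) : Prop :=
  Λ.FG ∧ Submodule.span K (Λ : Set V) = ⊤

/-- The index `[M : N]` of lattices `N ⊆ M`: the length of the `O`-module `M/N`. -/
noncomputable def latInd (N M : Submodule O V) : ℕ∞ :=
  WithBot.unbotD 0 (Order.krullDim (Submodule O (↥M ⧸ Submodule.comap M.subtype N)))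

section AuxOrder

set_option linter.unusedSectionVars false

lemma my_height_add_one_le {α : Type*} [Preorder α] {x y : α} (hxy : x < y) :
    Order.height x + 1 ≤ Order.height y := by
  rcases eq_or_ne (Order.height x) ⊤ with hfin | hfin
  · have h2 : Order.height y = ⊤ := top_le_iff.mp (hfin ▸ Order.height_mono hxy.le)
    rw [hfin, h2]; simp
  · exact (ENat.add_one_le_iff hfin).mpr (Order.height_strictMono hxy (lt_top_iff_ne_top.mpr hfin))

lemma my_enat_add_le_of_forall {h1 h2 h : ℕ∞}
    (H : ∀ n m : ℕ, (n : ℕ∞) ≤ h1 → (m : ℕ∞) ≤ h2 → (n : ℕ∞) + m ≤ h) :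
    h1 + h2 ≤ h := by
  rcases eq_or_ne h ⊤ with rfl | hh
  · exact le_top
  lift h to ℕ using hh
  have key : ∀ x : ℕ∞, (∀ n : ℕ, (n : ℕ∞) ≤ x → (n : ℕ∞) ≤ (h : ℕ∞)) → x ≤ (h : ℕ∞) := by
    intro x hx
    rcases eq_or_ne x ⊤ with rfl | hx'
    · have h1 := hx (h + 1) le_top
      have h2 : (h : ℕ) + 1 ≤ h := by exact_mod_cast h1
      omega
    · lift x to ℕ using hx'
      exact hx x le_rfl
  have h1' := key h1 fun n hn => by simpa using H n 0 hn (by simp)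
  have h2' := key h2 fun m hm => by simpa using H 0 m (by simp) hm
  lift h1 to ℕ using ne_top_of_le_ne_top (WithTop.coe_ne_top) h1'
  lift h2 to ℕ using ne_top_of_le_ne_top (WithTop.coe_ne_top) h2'
  exact_mod_cast H h1 h2 le_rfl le_rfl

/-- The length of the interval `[a, c]`, as the height of `c` in the poset `Set.Icc a c`. -/
noncomputable def relLen {α : Type*} [Preorder α] (a c : α) (h : a ≤ c) : ℕ∞ :=
  Order.height (⟨c, h, le_rfl⟩ : Set.Icc a c)

lemma relLen_orderIso {α : Type*} [Preorder α] {β : Type*} [Preorder β] (f : α ≃o β)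
    (a c : α) (h : a ≤ c) :
    relLen (f a) (f c) (f.monotone h) = relLen a c h := by
  let g : Set.Icc a c ≃o Set.Icc (f a) (f c) :=
    { toFun := fun x => ⟨f x.1, f.monotone x.2.1, f.monotone x.2.2⟩
      invFun := fun y => ⟨f.symm y.1, by simpa using f.symm.monotone y.2.1,
        by simpa using f.symm.monotone y.2.2⟩
      left_inv := fun x => Subtype.ext (by simp)
      right_inv := fun y => Subtype.ext (by simp)
      map_rel_iff' := by intro x y; simp [Subtype.mk_le_mk, ← Subtype.coe_le_coe] }
  exact Order.height_orderIso g ⟨c, h, le_rfl⟩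

/-- Additivity of interval lengths in a modular lattice. -/
lemma relLen_add {α : Type*} [Lattice α] [IsModularLattice α] {a b c : α}
    (hab : a ≤ b) (hbc : b ≤ c) :
    relLen a c (hab.trans hbc) = relLen a b hab + relLen b c hbc := by
  set φ : Set.Icc a c → Set.Icc a b :=
    fun x => ⟨(x : α) ⊓ b, le_inf x.2.1 hab, inf_le_right⟩ with hφ
  set ψ : Set.Icc a c → Set.Icc b c :=
    fun x => ⟨(x : α) ⊔ b, le_sup_right, sup_le x.2.2 hbc⟩ with hψ
  apply le_antisymm
  · have key : ∀ n : ℕ, ∀ p : LTSeries (Set.Icc a c), p.length = n →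
        (n : ℕ∞) ≤ Order.height (φ p.last) + Order.height (ψ p.last) := by
      intro n
      induction n with
      | zero => intro p hp; simp
      | succ n ih =>
        intro p hp
        have h0 : p.length ≠ 0 := by omega
        have hlast : p.eraseLast.last < p.last := p.eraseLast_last_rel_last h0
        have hlast' : (p.eraseLast.last : α) < (p.last : α) := hlast
        have hlen : p.eraseLast.length = n := by
          simp [RelSeries.eraseLast_length, hp]
        have IH := ih p.eraseLast hlen
        have hmono2 : ψ p.eraseLast.last ≤ ψ p.last :=
          show (p.eraseLast.last : α) ⊔ b ≤ (p.last : α) ⊔ b from sup_le_sup_right hlast'.le b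
        have hmono1 : φ p.eraseLast.last ≤ φ p.last :=
          show (p.eraseLast.last : α) ⊓ b ≤ (p.last : α) ⊓ b from inf_le_inf_right b hlast'.le
        have hstep : φ p.eraseLast.last < φ p.last ∨ ψ p.eraseLast.last < ψ p.last := by
          by_cases hc1 : (p.eraseLast.last : α) ⊓ b < (p.last : α) ⊓ b
          · exact Or.inl hc1
          · right
            have heq : (p.last : α) ⊓ b ≤ (p.eraseLast.last : α) ⊓ b :=
              ((inf_le_inf_right b hlast'.le).lt_or_eq.resolve_left hc1).ge
            exact sup_lt_sup_of_lt_of_inf_le_inf hlast' heq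
        have hcast : ((n + 1 : ℕ) : ℕ∞) = (n : ℕ∞) + 1 := by push_cast; ring
        rw [hcast]
        rcases hstep with hs | hs
        · calc (n : ℕ∞) + 1
              ≤ (Order.height (φ p.eraseLast.last) + Order.height (ψ p.eraseLast.last)) + 1 :=
                add_le_add_left IH 1
            _ = (Order.height (φ p.eraseLast.last) + 1) + Order.height (ψ p.eraseLast.last) := by
                ring
            _ ≤ Order.height (φ p.last) + Order.height (ψ p.last) :=
                add_le_add (my_height_add_one_le hs) (Order.height_mono hmono2)
        · calc (n : ℕ∞) + 1
              ≤ (Order.height (φ p.eraseLast.last) + Order.height (ψ p.eraseLast.last)) + 1 :=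
                add_le_add_left IH 1
            _ = Order.height (φ p.eraseLast.last) + (Order.height (ψ p.eraseLast.last) + 1) := by
                ring
            _ ≤ Order.height (φ p.last) + Order.height (ψ p.last) :=
                add_le_add (Order.height_mono hmono1) (my_height_add_one_le hs)
    apply Order.height_le
    intro p hplast
    have hk := key p.length p rfl
    rw [hplast] at hk
    have e1 : φ ⟨c, hab.trans hbc, le_rfl⟩ = (⟨b, hab, le_rfl⟩ : Set.Icc a b) :=
      Subtype.ext (inf_eq_right.mpr hbc)
    have e2 : ψ ⟨c, hab.trans hbc, le_rfl⟩ = (⟨c, hbc, le_rfl⟩ : Set.Icc b c) :=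
      Subtype.ext (sup_eq_left.mpr hbc)
    rw [e1, e2] at hk
    exact hk
  · apply my_enat_add_le_of_forall
    intro n m hn hm
    obtain ⟨p, hpl, hplen⟩ := Order.exists_series_of_le_height _ hn
    obtain ⟨q, hql, hqlen⟩ := Order.exists_series_of_le_height _ hm
    have sm1 : StrictMono (fun x : Set.Icc a b => (⟨x.1, x.2.1, x.2.2.trans hbc⟩ : Set.Icc a c)) :=
      fun _ _ hxy => hxy
    have sm2 : StrictMono (fun x : Set.Icc b c => (⟨x.1, hab.trans x.2.1, x.2.2⟩ : Set.Icc a c)) :=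
      fun _ _ hxy => hxy
    set p' := p.map _ sm1 with hp'
    set q' := q.map _ sm2 with hq'
    have hq'last : q'.last = ⟨c, hab.trans hbc, le_rfl⟩ := by
      rw [hq', LTSeries.last_map, hql]
    have hconn : p'.last ≤ q'.head := by
      have h1 : p'.last = (⟨b, hab, hbc⟩ : Set.Icc a c) := by
        rw [hp', LTSeries.last_map, hpl]
      rw [h1]
      show b ≤ (q'.head : α)
      rw [hq', LTSeries.head_map]
      exact q.head.2.1
    have hfin : ∀ r : LTSeries (Set.Icc a c), r.last = q'.last → n + m ≤ r.length →
        (n : ℕ∞) + m ≤ Order.height (⟨c, hab.trans hbc, le_rfl⟩ : Set.Icc a c) := by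
      intro r hr hlen
      have hle := Order.length_le_height_last (p := r)
      rw [hr, hq'last] at hle
      refine le_trans ?_ hle
      exact_mod_cast Nat.cast_le.mpr hlen
    rcases eq_or_lt_of_le hconn with heq | hlt
    · refine hfin (p'.smash q' heq) (RelSeries.last_smash _) ?_
      simp [RelSeries.smash_length, hp', hq', hplen, hqlen]
    · refine hfin ((p'.snoc q'.head hlt).smash q' (RelSeries.last_snoc _ _ _))
        (RelSeries.last_smash _) ?_
      simp [RelSeries.smash_length, RelSeries.snoc_length, hp', hq', hplen, hqlen]

end AuxOrder

section AuxLat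

set_option linter.unusedSectionVars false

/-- The lattice of submodules of `M/N` is order-isomorphic to the interval `[N, M]`. -/
noncomputable def latticeIso (N M : Submodule O V) (h : N ≤ M) :
    Submodule O (↥M ⧸ Submodule.comap M.subtype N) ≃o Set.Icc N M := by
  refine Equiv.toOrderIso
    { toFun := fun q => ⟨Submodule.map M.subtype
        (Submodule.comap (Submodule.comap M.subtype N).mkQ q), ?_, Submodule.map_subtype_le M _⟩
      invFun := fun r => Submodule.map (Submodule.comap M.subtype N).mkQ
        (Submodule.comap M.subtype r.1)
      left_inv := fun q => ?_
      right_inv := fun r => Subtype.ext ?_ } ?_ ?_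
  · calc N = Submodule.map M.subtype (Submodule.comap M.subtype N) := by
          rw [Submodule.map_comap_subtype, inf_eq_right.mpr h]
      _ ≤ _ := Submodule.map_mono
          ((Submodule.ker_mkQ (Submodule.comap M.subtype N)).symm.trans_le
            (LinearMap.ker_le_comap _))
  · dsimp only
    rw [Submodule.comap_map_eq_of_injective (Submodule.injective_subtype M),
      Submodule.map_comap_eq_of_surjective (Submodule.mkQ_surjective _)]
  · dsimp only
    rw [Submodule.comap_map_mkQ, Submodule.map_sup, Submodule.map_comap_subtype,
      Submodule.map_comap_subtype, inf_eq_right.mpr h, inf_eq_right.mpr r.2.2,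
      sup_eq_right.mpr r.2.1]
  · intro q q' hq
    exact Subtype.mk_le_mk.mpr (Submodule.map_mono (Submodule.comap_mono hq))
  · intro r r' hr
    exact Submodule.map_mono (Submodule.comap_mono hr)

lemma latInd_eq_relLen (N M : Submodule O V) (h : N ≤ M) :
    latInd N M = relLen N M h := by
  unfold latInd relLen
  rw [Order.krullDim_eq_of_orderIso (latticeIso N M h)]
  letI : OrderTop (Set.Icc N M) :=
    { top := ⟨M, h, le_rfl⟩
      le_top := fun x => x.2.2 }
  rw [← Order.height_top_eq_krullDim, WithBot.unbotD_coe]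
  rfl

lemma smul_submono (c : K) {L L' : Submodule O V} (hLL : L ≤ L') : c • L ≤ c • L' := by
  rw [← SetLike.coe_subset_coe, Submodule.coe_pointwise_smul, Submodule.coe_pointwise_smul]
  exact Set.smul_set_mono hLL

/-- Scaling by a nonzero element of `K` as an order automorphism of the lattice of
`O`-submodules of `V`. -/
noncomputable def smulIso (c : K) (hc : c ≠ 0) : Submodule O V ≃o Submodule O V :=
  Equiv.toOrderIso
    { toFun := fun L => c • L
      invFun := fun L => c⁻¹ • L
      left_inv := fun L => by show c⁻¹ • c • L = L; rw [smul_smul, inv_mul_cancel₀ hc, one_smul]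
      right_inv := fun L => by show c • c⁻¹ • L = L; rw [smul_smul, mul_inv_cancel₀ hc, one_smul] }
    (fun _ _ hLL => smul_submono K c hLL) (fun _ _ hLL => smul_submono K c⁻¹ hLL)

lemma latInd_smul (c : K) (hc : c ≠ 0) (N M : Submodule O V) (h : N ≤ M) :
    latInd (c • N) (c • M) = latInd N M := by
  rw [latInd_eq_relLen (c • N) (c • M) (smul_submono K c h), latInd_eq_relLen N M h]
  exact relLen_orderIso (smulIso K c hc) N M h

lemma latInd_add (N M P : Submodule O V) (h1 : N ≤ M) (h2 : M ≤ P) :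
    latInd N P = latInd N M + latInd M P := by
  rw [latInd_eq_relLen N P (h1.trans h2), latInd_eq_relLen N M h1, latInd_eq_relLen M P h2,
    relLen_add h1 h2]

end AuxLat

theorem index_succ_eq [Nontrivial V] [FiniteDimensional K V]
    (π : O) (hπ : Irreducible π)
    (d : Submodule O V → Submodule O V)
    (hanti : ∀ L L' : Submodule O V, L ≤ L' → d L' ≤ d L)
    (hind : ∀ L L' : Submodule O V, L ≤ L' → latInd L L' = latInd (d L') (d L))
    (m : ℕ) (A B : ℕ → Submodule O V) (h : ℕ → ℕ)
    (hfullA : ∀ i, 1 ≤ i → i ≤ m → IsFullLat K (A i))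
    (hfullB : ∀ i, 1 ≤ i → i ≤ m → IsFullLat K (B i))
    (hmono : ∀ i, 1 ≤ i → i < m → h i < h (i + 1))
    (hchainA : ∀ i, 1 ≤ i → i < m → A (i + 1) ≤ A i)
    (hchainB : ∀ i, 1 ≤ i → i < m → B i ≤ B (i + 1))
    (hAB : A 1 ≤ B 1)
    (hdualA : ∀ i, 1 ≤ i → i ≤ m →
      piSm K π 1 (d (A i)) ≤ B i ∧ latInd (piSm K π 1 (d (A i))) (B i) = 1)
    (hdualB : ∀ i, 1 ≤ i → i ≤ m →
      piSm K π 1 (d (B i)) ≤ A i ∧ latInd (piSm K π 1 (d (B i))) (A i) = 1)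
    (hBA : ∀ i, 1 ≤ i → i ≤ m → A i ≤ B i ∧ latInd (A i) (B i) = (h i : ℕ∞)) :
    ∀ i, 1 ≤ i → i < m →
      latInd (A (i + 1)) (A i) = (((h (i + 1) - h i) / 2 : ℕ) : ℕ∞) ∧
      latInd (B i) (B (i + 1)) = (((h (i + 1) - h i) / 2 : ℕ) : ℕ∞) := by
  intro i hi1 him
  have him' : i ≤ m := le_of_lt him
  have hi11 : 1 ≤ i + 1 := by omega
  have him1 : i + 1 ≤ m := him
  obtain ⟨hABi, hindBi⟩ := hBA i hi1 him'
  obtain ⟨hABi1, hindBi1⟩ := hBA (i + 1) hi11 him1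
  have hA : A (i + 1) ≤ A i := hchainA i hi1 him
  have hB : B i ≤ B (i + 1) := hchainB i hi1 him
  set c : K := algebraMap O K π with hcdef
  have hc : c ≠ 0 := by
    intro hzero
    refine hπ.ne_zero (IsFractionRing.injective O K ?_)
    rw [map_zero, ← hcdef]
    exact hzero
  have hpi : ∀ L : Submodule O V, piSm K π 1 L = c • L := by
    intro L
    unfold piSm
    rw [zpow_one, ← hcdef]
  obtain ⟨hTB, hTB1⟩ := hdualA (i + 1) hi11 him1
  obtain ⟨hSB, hSB1⟩ := hdualA i hi1 him'
  rw [hpi] at hTB hTB1 hSB hSB1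
  have hST : c • d (A i) ≤ c • d (A (i + 1)) := smul_submono K c (hanti _ _ hA)
  have hSTi : latInd (c • d (A i)) (c • d (A (i + 1))) = latInd (A (i + 1)) (A i) := by
    rw [latInd_smul K c hc _ _ (hanti _ _ hA)]
    exact (hind _ _ hA).symm
  have e1 : latInd (c • d (A i)) (B (i + 1)) =
      latInd (c • d (A i)) (B i) + latInd (B i) (B (i + 1)) :=
    latInd_add _ _ _ hSB hB
  have e2 : latInd (c • d (A i)) (B (i + 1)) =
      latInd (c • d (A i)) (c • d (A (i + 1))) + latInd (c • d (A (i + 1))) (B (i + 1)) :=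
    latInd_add _ _ _ hST hTB
  have eab : latInd (A (i + 1)) (A i) = latInd (B i) (B (i + 1)) := by
    have e3 := e1.symm.trans e2
    rw [hSB1, hTB1, hSTi, add_comm] at e3
    exact (WithTop.add_right_cancel (by exact ENat.one_ne_top) e3).symm
  have etot : (h (i + 1) : ℕ∞) =
      latInd (A (i + 1)) (A i) + (h i : ℕ∞) + latInd (B i) (B (i + 1)) := by
    rw [← hindBi1, latInd_add (A (i + 1)) (B i) (B (i + 1)) (hA.trans hABi) hB,
      latInd_add (A (i + 1)) (A i) (B i) hA hABi, hindBi]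
  set a : ℕ∞ := latInd (A (i + 1)) (A i) with hadef
  have haneq : a ≠ ⊤ := by
    intro htop
    rw [htop] at etot
    simp at etot
  lift a to ℕ using haneq with n hn
  rw [← eab] at etot
  have hnat : h (i + 1) = n + h i + n := by exact_mod_cast etot
  have hdiv : (h (i + 1) - h i) / 2 = n := by omega
  rw [hdiv]
  exact ⟨rfl, eab.symm⟩
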